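/- Suppose V has dimension 3 over ℝ. Then for every element U of the Clifford algebra Cl(Q), one has involute(U)·U + reverse(involute(U))·reverse(U) = U·involute(U) + reverse(U)·reverse(involute(U)); equivalently, the commutator [involute(U), U] is fixed by the reversion. -/

import Mathlib

open CliffordAlgebra

section Aux
variable {V : Type*} [AddCommGroup V] [Module ℝ V] {Q : QuadraticForm ℝ V}

/-- The symmetrized "commutator-reversal defect" bilinear map. -/
noncomputable def Tb (Q : QuadraticForm ℝ V) :
    CliffordAlgebra Q →ₗ[ℝ] CliffordAlgebra Q →ₗ[ℝ] CliffordAlgebra Q :=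
  LinearMap.mk₂ ℝ (fun x y =>
    (involute x * y + reverse (involute x) * reverse y - x * involute y
      - reverse x * reverse (involute y)) +
    (involute y * x + reverse (involute y) * reverse x - y * involute x
      - reverse y * reverse (involute x)))
    (by intro x x' y; simp only [map_add, add_mul, mul_add]; abel)
    (by intro c x y; simp only [map_smul, smul_mul_assoc, mul_smul_comm, smul_add, smul_sub])
    (by intro x y y'; simp only [map_add, add_mul, mul_add]; abel)
    (by intro x c y; simp only [map_smul, smul_mul_assoc, mul_smul_comm, smul_add, smul_sub])

theorem Tb_comm (x y : CliffordAlgebra Q) : Tb Q x y = Tb Q y x := by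
  simp only [Tb, LinearMap.mk₂_apply]; abel

theorem Tb_apply (x y : CliffordAlgebra Q) : Tb Q x y =
    (involute x * y + reverse (involute x) * reverse y - x * involute y
      - reverse x * reverse (involute y)) +
    (involute y * x + reverse (involute y) * reverse x - y * involute x
      - reverse y * reverse (involute x)) := rfl

theorem pairA (x y : CliffordAlgebra Q) (hx : involute x = x) (hy : involute y = y) :
    Tb Q x y = 0 := by
  simp only [Tb_apply, hx, hy]; abel

theorem pairB (x y : CliffordAlgebra Q) (hx : involute x = -x) (hy : involute y = -y) :
    Tb Q x y = 0 := by
  simp only [Tb_apply, hx, hy, map_neg, neg_mul, mul_neg, neg_neg]; abel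

theorem pairC (x y : CliffordAlgebra Q) (hx : reverse x = x) (hy : reverse y = -y) :
    Tb Q x y = 0 := by
  simp only [Tb_apply, reverse_involute, hx, hy, map_neg, neg_mul, mul_neg, neg_neg]; abel

theorem pairD (x y : CliffordAlgebra Q) (hxi : involute x = x) (hxr : reverse x = -x)
    (hyi : involute y = -y) (hyr : reverse y = -y) (hc : x * y = y * x) :
    Tb Q x y = 0 := by
  simp only [Tb_apply, reverse_involute, hxi, hxr, hyi, hyr, map_neg, neg_mul, mul_neg, neg_neg]
  rw [hc]; abel

theorem pairE (x : CliffordAlgebra Q) : Tb Q x 1 = 0 := by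
  simp only [Tb_apply, map_one, reverse.map_one, mul_one, one_mul]; abel

attribute [irreducible] Tb

end Aux

set_option maxHeartbeats 1000000 in
theorem stmt_15 {V : Type*} [AddCommGroup V] [Module ℝ V] (Q : QuadraticForm ℝ V)
    (h : Module.finrank ℝ V = 3) (U : CliffordAlgebra Q) :
    (involute U * U + reverse (involute U) * reverse U =
      U * involute U + reverse U * reverse (involute U)) ∧
    reverse (involute U * U - U * involute U) = involute U * U - U * involute U := by
  have hfd : FiniteDimensional ℝ V := Module.finite_of_finrank_pos (by omega)
  obtain ⟨v, hv⟩ := LinearMap.BilinForm.exists_orthogonal_basis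
    (QuadraticForm.associated_isSymm ℝ Q)
  let b : Module.Basis (Fin 3) ℝ V := v.reindex (finCongr h)
  have horth : ∀ i j : Fin 3, i ≠ j → Q.IsOrtho (b i) (b j) := by
    intro i j hij
    have hne : (finCongr h).symm i ≠ (finCongr h).symm j :=
      fun hh => hij ((finCongr h).symm.injective hh)
    have h2 := hv hne
    have h3 : QuadraticMap.IsOrtho Q (v ((finCongr h).symm i)) (v ((finCongr h).symm j)) :=
      QuadraticMap.associated_isOrtho.mp h2
    simpa [b, Module.Basis.reindex_apply] using h3
  have hsq1 : ∀ i, (ι Q (b i)) * (ι Q (b i)) = Q (b i) • (1 : CliffordAlgebra Q) := by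
    intro i
    rw [ι_sq_scalar, Algebra.algebraMap_eq_smul_one]
  have hsq' : ∀ i (t : CliffordAlgebra Q), (ι Q (b i)) * ((ι Q (b i)) * t) = Q (b i) • t := by
    intro i t; rw [← mul_assoc, hsq1, smul_mul_assoc, one_mul]
  have h10 : (ι Q (b 1)) * (ι Q (b 0)) = -((ι Q (b 0)) * (ι Q (b 1))) := ι_mul_ι_comm_of_isOrtho ((horth 0 1 (by decide)).symm)
  have h20 : (ι Q (b 2)) * (ι Q (b 0)) = -((ι Q (b 0)) * (ι Q (b 2))) := ι_mul_ι_comm_of_isOrtho ((horth 0 2 (by decide)).symm)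
  have h21 : (ι Q (b 2)) * (ι Q (b 1)) = -((ι Q (b 1)) * (ι Q (b 2))) := ι_mul_ι_comm_of_isOrtho ((horth 1 2 (by decide)).symm)
  have h10' : ∀ t, (ι Q (b 1)) * ((ι Q (b 0)) * t) = -((ι Q (b 0)) * ((ι Q (b 1)) * t)) := fun t =>
    ι_mul_ι_mul_of_isOrtho t ((horth 0 1 (by decide)).symm)
  have h20' : ∀ t, (ι Q (b 2)) * ((ι Q (b 0)) * t) = -((ι Q (b 0)) * ((ι Q (b 2)) * t)) := fun t =>
    ι_mul_ι_mul_of_isOrtho t ((horth 0 2 (by decide)).symm)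
  have h21' : ∀ t, (ι Q (b 2)) * ((ι Q (b 1)) * t) = -((ι Q (b 1)) * ((ι Q (b 2)) * t)) := fun t =>
    ι_mul_ι_mul_of_isOrtho t ((horth 1 2 (by decide)).symm)
  set S : Set (CliffordAlgebra Q) :=
    {1, (ι Q (b 0)), (ι Q (b 1)), (ι Q (b 2)), (ι Q (b 0)) * (ι Q (b 1)), (ι Q (b 0)) * (ι Q (b 2)), (ι Q (b 1)) * (ι Q (b 2)), (ι Q (b 0)) * ((ι Q (b 1)) * (ι Q (b 2)))} with hS
  have hstep0 : ∀ z ∈ S, (ι Q (b 0)) * z ∈ Submodule.span ℝ S := by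
    intro z hz
    simp only [hS, Set.mem_insert_iff, Set.mem_singleton_iff] at hz
    rcases hz with rfl|rfl|rfl|rfl|rfl|rfl|rfl|rfl <;>
      (try simp only [mul_one, hsq1, hsq', h10, h20, h21, h10', h20', h21',
        mul_neg, neg_neg, mul_smul_comm, smul_smul]) <;>
      (repeat first | apply Submodule.neg_mem | apply Submodule.smul_mem) <;>
      (apply Submodule.subset_span) <;>
      (simp only [hS, Set.mem_insert_iff, Set.mem_singleton_iff]; tauto)
  have hstep1 : ∀ z ∈ S, (ι Q (b 1)) * z ∈ Submodule.span ℝ S := by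
    intro z hz
    simp only [hS, Set.mem_insert_iff, Set.mem_singleton_iff] at hz
    rcases hz with rfl|rfl|rfl|rfl|rfl|rfl|rfl|rfl <;>
      (try simp only [mul_one, hsq1, hsq', h10, h20, h21, h10', h20', h21',
        mul_neg, neg_neg, mul_smul_comm, smul_smul]) <;>
      (repeat first | apply Submodule.neg_mem | apply Submodule.smul_mem) <;>
      (apply Submodule.subset_span) <;>
      (simp only [hS, Set.mem_insert_iff, Set.mem_singleton_iff]; tauto)
  have hstep2 : ∀ z ∈ S, (ι Q (b 2)) * z ∈ Submodule.span ℝ S := by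
    intro z hz
    simp only [hS, Set.mem_insert_iff, Set.mem_singleton_iff] at hz
    rcases hz with rfl|rfl|rfl|rfl|rfl|rfl|rfl|rfl <;>
      (try simp only [mul_one, hsq1, hsq', h10, h20, h21, h10', h20', h21',
        mul_neg, neg_neg, mul_smul_comm, smul_smul]) <;>
      (repeat first | apply Submodule.neg_mem | apply Submodule.smul_mem) <;>
      (apply Submodule.subset_span) <;>
      (simp only [hS, Set.mem_insert_iff, Set.mem_singleton_iff]; tauto)
  have hstep : ∀ i : Fin 3, ∀ z ∈ Submodule.span ℝ S,
      ι Q (b i) * z ∈ Submodule.span ℝ S := by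
    intro i z hz
    induction hz using Submodule.span_induction with
    | mem x hx =>
        fin_cases i
        · exact hstep0 x hx
        · exact hstep1 x hx
        · exact hstep2 x hx
    | zero => simp
    | add x y _ _ hx hy => rw [mul_add]; exact add_mem hx hy
    | smul c x _ hx => rw [mul_smul_comm]; exact Submodule.smul_mem _ _ hx
  have hmul : ∀ x : CliffordAlgebra Q, ∀ z ∈ Submodule.span ℝ S,
      x * z ∈ Submodule.span ℝ S := by
    intro x
    induction x using CliffordAlgebra.induction with
    | algebraMap r =>
        intro z hz; rw [← Algebra.smul_def]; exact Submodule.smul_mem _ _ hz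
    | ι w =>
        intro z hz
        have hw : ∑ i, b.repr w i • b i = w := b.sum_repr w
        rw [← hw, map_sum, Finset.sum_mul]
        refine Submodule.sum_mem _ fun i _ => ?_
        rw [map_smul, smul_mul_assoc]
        exact Submodule.smul_mem _ _ (hstep i z hz)
    | mul x y hx hy => intro z hz; rw [mul_assoc]; exact hx _ (hy _ hz)
    | add x y hx hy => intro z hz; rw [add_mul]; exact add_mem (hx z hz) (hy z hz)
  have hone : (1 : CliffordAlgebra Q) ∈ Submodule.span ℝ S :=
    Submodule.subset_span (by simp only [hS, Set.mem_insert_iff]; tauto)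
  have htop : Submodule.span ℝ S = ⊤ := by
    rw [eq_top_iff]
    intro x _
    simpa using hmul x 1 hone
  -- involute facts
  have hiv0 : involute (ι Q (b 0)) = -(ι Q (b 0)) := involute_ι _
  have hiv1 : involute (ι Q (b 1)) = -(ι Q (b 1)) := involute_ι _
  have hiv2 : involute (ι Q (b 2)) = -(ι Q (b 2)) := involute_ι _
  have hiv01 : involute ((ι Q (b 0)) * (ι Q (b 1))) = (ι Q (b 0)) * (ι Q (b 1)) := by
    simp [map_mul, involute_ι]
  have hiv02 : involute ((ι Q (b 0)) * (ι Q (b 2))) = (ι Q (b 0)) * (ι Q (b 2)) := by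
    simp [map_mul, involute_ι]
  have hiv12 : involute ((ι Q (b 1)) * (ι Q (b 2))) = (ι Q (b 1)) * (ι Q (b 2)) := by
    simp [map_mul, involute_ι]
  have hivw : involute ((ι Q (b 0)) * ((ι Q (b 1)) * (ι Q (b 2)))) = -((ι Q (b 0)) * ((ι Q (b 1)) * (ι Q (b 2)))) := by
    simp [map_mul, involute_ι]
  -- reverse facts
  have hrv0 : reverse (Q := Q) (ι Q (b 0)) = (ι Q (b 0)) := reverse_ι _
  have hrv1 : reverse (Q := Q) (ι Q (b 1)) = (ι Q (b 1)) := reverse_ι _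
  have hrv2 : reverse (Q := Q) (ι Q (b 2)) = (ι Q (b 2)) := reverse_ι _
  have hrv01 : reverse ((ι Q (b 0)) * (ι Q (b 1))) = -((ι Q (b 0)) * (ι Q (b 1))) := by
    rw [reverse.map_mul, reverse_ι, reverse_ι, h10]
  have hrv02 : reverse ((ι Q (b 0)) * (ι Q (b 2))) = -((ι Q (b 0)) * (ι Q (b 2))) := by
    rw [reverse.map_mul, reverse_ι, reverse_ι, h20]
  have hrv12 : reverse ((ι Q (b 1)) * (ι Q (b 2))) = -((ι Q (b 1)) * (ι Q (b 2))) := by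
    rw [reverse.map_mul, reverse_ι, reverse_ι, h21]
  have hrvw : reverse ((ι Q (b 0)) * ((ι Q (b 1)) * (ι Q (b 2)))) = -((ι Q (b 0)) * ((ι Q (b 1)) * (ι Q (b 2)))) := by
    rw [reverse.map_mul, reverse.map_mul, reverse_ι, reverse_ι, reverse_ι]
    simp only [mul_assoc, h10, h20, h21, h10', h20', h21', neg_mul, mul_neg, neg_neg]
  -- commutation of bivectors with the volume element
  have hc01 : ((ι Q (b 0)) * (ι Q (b 1))) * ((ι Q (b 0)) * ((ι Q (b 1)) * (ι Q (b 2)))) = ((ι Q (b 0)) * ((ι Q (b 1)) * (ι Q (b 2)))) * ((ι Q (b 0)) * (ι Q (b 1))) := by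
    simp only [mul_assoc, h10, h20, h21, h10', h20', h21', hsq', mul_neg, neg_neg,
      neg_mul, mul_smul_comm, smul_smul, smul_neg]
  have hc02 : ((ι Q (b 0)) * (ι Q (b 2))) * ((ι Q (b 0)) * ((ι Q (b 1)) * (ι Q (b 2)))) = ((ι Q (b 0)) * ((ι Q (b 1)) * (ι Q (b 2)))) * ((ι Q (b 0)) * (ι Q (b 2))) := by
    simp only [mul_assoc, h10, h20, h21, h10', h20', h21', hsq', mul_neg, neg_neg,
      neg_mul, mul_smul_comm, smul_smul, smul_neg]
  have hc12 : ((ι Q (b 1)) * (ι Q (b 2))) * ((ι Q (b 0)) * ((ι Q (b 1)) * (ι Q (b 2)))) = ((ι Q (b 0)) * ((ι Q (b 1)) * (ι Q (b 2)))) * ((ι Q (b 1)) * (ι Q (b 2))) := by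
    simp only [mul_assoc, h10, h20, h21, h10', h20', h21', hsq', mul_neg, neg_neg,
      neg_mul, mul_smul_comm, smul_smul, smul_neg]
  have hBgen : ∀ x ∈ S, ∀ y ∈ S, Tb Q x y = 0 := by
    intro x hx y hy
    simp only [hS, Set.mem_insert_iff, Set.mem_singleton_iff] at hx hy
    rcases hx with rfl|rfl|rfl|rfl|rfl|rfl|rfl|rfl <;>
      rcases hy with rfl|rfl|rfl|rfl|rfl|rfl|rfl|rfl <;>
      first
        | exact pairE _
        | (rw [Tb_comm]; exact pairE _)
        | exact pairA _ _ (by assumption) (by assumption)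
        | exact pairB _ _ (by assumption) (by assumption)
        | exact pairD _ _ (by assumption) (by assumption) (by assumption) (by assumption)
            (by assumption)
        | (rw [Tb_comm]; exact pairD _ _ (by assumption) (by assumption) (by assumption)
            (by assumption) (by assumption))
        | exact pairC _ _ (by assumption) (by assumption)
        | (rw [Tb_comm]; exact pairC _ _ (by assumption) (by assumption))
  have hB : Tb Q = 0 :=
    LinearMap.ext_on htop fun x hx => LinearMap.ext_on htop fun y hy => by
      simpa using hBgen x hx y hy
  have hDD : Tb Q U U = 0 := by rw [hB]; rfl
  rw [Tb_apply] at hDD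
  set D : CliffordAlgebra Q := involute U * U + reverse (involute U) * reverse U
      - U * involute U - reverse U * reverse (involute U) with hD
  have h2D : (2 : ℝ) • D = 0 := by
    rw [two_smul]
    exact hDD
  have hD0 : D = 0 := by
    have := congrArg (fun z => (2⁻¹ : ℝ) • z) h2D
    simpa [smul_smul] using this
  constructor
  · rw [← sub_eq_zero]
    rw [show involute U * U + reverse (involute U) * reverse U
        - (U * involute U + reverse U * reverse (involute U)) = D from by rw [hD]; abel]
    exact hD0
  · rw [map_sub, reverse.map_mul, reverse.map_mul, ← sub_eq_zero]
    rw [show reverse U * reverse (involute U) - reverse (involute U) * reverse U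
        - (involute U * U - U * involute U) = -D from by rw [hD]; abel]
    rw [hD0, neg_zero]
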